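/- Let L be a nondegenerate even integral lattice and r ∈ L a primitive vector with reflection σ_r ∈ O(L). If σ_r acts as -id on the discriminant group D(L) = L∨/L, and a > 0 is defined appropriately, then either r² = ±2a with div(r) = a odd, or r² = ±a with div(r) = a or a/2; moreover in this situation D(L) is isomorphic to (ℤ/2ℤ)^m × (ℤ/aℤ) for some m ≥ 0. -/

import Mathlib

open Matrix

/-- The subgroup of vectors of `ℚ^ι` with integral coordinates (the lattice `L` inside `L ⊗ ℚ`). -/
def intVecs (ι : Type*) [Fintype ι] : AddSubgroup (ι → ℚ) where
  carrier := {x | ∀ i, ∃ z : ℤ, x i = z}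
  add_mem' := by
    intro a b ha hb i
    obtain ⟨z, hz⟩ := ha i
    obtain ⟨w, hw⟩ := hb i
    exact ⟨z + w, by simp [Pi.add_apply, hz, hw]⟩
  zero_mem' := fun i => ⟨0, by simp⟩
  neg_mem' := by
    intro a ha i
    obtain ⟨z, hz⟩ := ha i
    exact ⟨-z, by simp [Pi.neg_apply, hz]⟩

/-- The dual lattice `L∨ ⊆ L ⊗ ℚ` of the lattice with Gram matrix `B`. -/
def dualLat {ι : Type*} [Fintype ι] (B : Matrix ι ι ℤ) : AddSubgroup (ι → ℚ) where
  carrier := {x | ∀ v : ι → ℤ, ∃ z : ℤ,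
    x ⬝ᵥ (B.map (Int.cast : ℤ → ℚ)).mulVec (fun i => (v i : ℚ)) = z}
  add_mem' := by
    intro a b ha hb v
    obtain ⟨z, hz⟩ := ha v
    obtain ⟨w, hw⟩ := hb v
    exact ⟨z + w, by rw [add_dotProduct, hz, hw]; push_cast; ring⟩
  zero_mem' := fun v => ⟨0, by simp⟩
  neg_mem' := by
    intro a ha v
    obtain ⟨z, hz⟩ := ha v
    exact ⟨-z, by rw [neg_dotProduct, hz]; push_cast; ring⟩

/-- The reflection `σ_r` extended ℚ-linearly: `σ_r(x) = x - (2(x,r)/(r,r))·r`. -/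
def reflQ {ι : Type*} [Fintype ι] (B : Matrix ι ι ℤ) (r : ι → ℤ) (x : ι → ℚ) : ι → ℚ :=
  fun i => x i -
    (2 * (x ⬝ᵥ (B.map (Int.cast : ℤ → ℚ)).mulVec (fun j => (r j : ℚ))) /
      ((r ⬝ᵥ B.mulVec r : ℤ) : ℚ)) * (r i : ℚ)

/-- The discriminant group `D(L) = L∨/L` of the lattice with Gram matrix `B`. -/
abbrev discGroup {ι : Type*} [Fintype ι] (B : Matrix ι ι ℤ) :=
  (dualLat B) ⧸ ((intVecs ι).addSubgroupOf (dualLat B))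


section helpers
variable {n : ℕ}

lemma symmPairInt (B : Matrix (Fin n) (Fin n) ℤ) (hsymm : B.IsSymm) (u v : Fin n → ℤ) :
    u ⬝ᵥ B.mulVec v = v ⬝ᵥ B.mulVec u := by
  rw [Matrix.dotProduct_mulVec]
  conv_lhs => rw [← hsymm.eq]
  rw [Matrix.vecMul_transpose, dotProduct_comm]

lemma castPair (B : Matrix (Fin n) (Fin n) ℤ) (u v : Fin n → ℤ) :
    (fun i => (u i : ℚ)) ⬝ᵥ (B.map (Int.cast : ℤ → ℚ)).mulVec (fun i => (v i : ℚ))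
      = ((u ⬝ᵥ B.mulVec v : ℤ) : ℚ) := by
  simp only [dotProduct, Matrix.mulVec, Matrix.map_apply]
  push_cast
  rfl

/-- Bezout for a primitive vector. -/
lemma bezout (r : Fin n → ℤ) (hprim : ∀ (k : ℤ) (v : Fin n → ℤ), r = k • v → IsUnit k) :
    ∃ f : Fin n → ℤ, f ⬝ᵥ r = 1 := by
  classical
  let φ : (Fin n → ℤ) →+ ℤ := AddMonoidHom.mk' (fun f => f ⬝ᵥ r) (fun x y => add_dotProduct x y r)
  obtain ⟨d, hd⟩ := Int.subgroup_cyclic φ.range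
  have hri : ∀ i, ∃ m : ℤ, r i = m * d := by
    intro i
    have : r i ∈ φ.range := ⟨Pi.single i 1, by simp [φ, Pi.single_apply, dotProduct]⟩
    rw [hd, AddSubgroup.mem_closure_singleton] at this
    obtain ⟨m, hm⟩ := this
    exact ⟨m, by rw [← hm]; simp [mul_comm]⟩
  choose v hv using hri
  have hdu : IsUnit d := hprim d v (funext fun i => by rw [hv i]; simp [mul_comm])
  have hdH : d ∈ φ.range := by
    rw [hd]; exact AddSubgroup.subset_closure rfl
  obtain ⟨f, hf⟩ := hdH
  rcases Int.isUnit_iff.1 hdu with h1 | h1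
  · exact ⟨f, by rw [show f ⬝ᵥ r = φ f from rfl, hf, h1]⟩
  · exact ⟨-f, by rw [neg_dotProduct, show f ⬝ᵥ r = φ f from rfl, hf, h1]; ring⟩

lemma primDvd (r : Fin n → ℤ) (hprim : ∀ (k : ℤ) (v : Fin n → ℤ), r = k • v → IsUnit k)
    (s t : ℤ) (h : ∀ i, s ∣ t * r i) : s ∣ t := by
  obtain ⟨f, hf⟩ := bezout r hprim
  have : s ∣ ∑ i, f i * (t * r i) := Finset.dvd_sum (fun i _ => Dvd.dvd.mul_left (h i) _)
  have he : ∑ i, f i * (t * r i) = t * (f ⬝ᵥ r) := by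
    simp only [dotProduct, Finset.mul_sum]; apply Finset.sum_congr rfl; intros; ring
  rwa [he, hf, mul_one] at this
end helpers

section dual
variable {n : ℕ} (B : Matrix (Fin n) (Fin n) ℤ)

lemma castSingle (j : Fin n) :
    (fun i => ((Pi.single j (1:ℤ) : Fin n → ℤ) i : ℚ)) = Pi.single j (1:ℚ) := by
  funext i
  rcases eq_or_ne i j with h | h
  · subst h; simp
  · simp [Pi.single_apply, h]

lemma dual_vecMul_int (x : Fin n → ℚ) (hx : x ∈ dualLat B) :
    ∃ y : Fin n → ℤ, x ᵥ* (B.map (Int.cast : ℤ → ℚ)) = fun j => (y j : ℚ) := by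
  have h : ∀ j, ∃ z : ℤ, (x ᵥ* (B.map (Int.cast : ℤ → ℚ))) j = z := by
    intro j
    obtain ⟨z, hz⟩ := hx (Pi.single j 1)
    refine ⟨z, ?_⟩
    rw [← hz, castSingle, Matrix.mulVec_single_one]
    simp [Matrix.vecMul, dotProduct, Matrix.map_apply]
  choose y hy using h
  exact ⟨y, funext hy⟩

lemma castDet : (B.map (Int.cast : ℤ → ℚ)).det = (B.det : ℚ) := by
  rw [show (B.map (Int.cast : ℤ → ℚ)) = (Int.castRingHom ℚ).mapMatrix B from rfl,
    ← RingHom.map_det]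
  rfl

lemma castDot (f v : Fin n → ℤ) :
    (fun i => (f i : ℚ)) ⬝ᵥ (fun i => (v i : ℚ)) = ((f ⬝ᵥ v : ℤ) : ℚ) := by
  simp only [dotProduct]
  push_cast
  rfl

/-- for `x` in the dual lattice, `det B • x` has integer coordinates. -/
lemma dual_det_int (x : Fin n → ℚ) (hx : x ∈ dualLat B) (i : Fin n) :
    ∃ z : ℤ, (B.det : ℚ) * x i = z := by
  obtain ⟨y, hy⟩ := dual_vecMul_int B x hx
  refine ⟨(y ᵥ* B.adjugate) i, ?_⟩
  have h1 : x ᵥ* ((B.map (Int.cast : ℤ → ℚ)) * (B.map (Int.cast : ℤ → ℚ)).adjugate)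
      = (B.det : ℚ) • x := by
    rw [Matrix.mul_adjugate]
    have hdet : (B.map (Int.cast : ℤ → ℚ)).det = (B.det : ℚ) := by
      rw [show (B.map (Int.cast : ℤ → ℚ)) = (Int.castRingHom ℚ).mapMatrix B from rfl,
        ← RingHom.map_det]
      rfl
    rw [hdet]
    funext j
    simp [Matrix.vecMul, dotProduct, Matrix.one_apply, mul_ite, mul_comm]
  have h2 : x ᵥ* ((B.map (Int.cast : ℤ → ℚ)) * (B.map (Int.cast : ℤ → ℚ)).adjugate)
      = (fun j => (y j : ℚ)) ᵥ* ((B.adjugate).map (Int.cast : ℤ → ℚ)) := by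
    rw [← Matrix.vecMul_vecMul, hy,
      show (B.map (Int.cast : ℤ → ℚ)).adjugate
          = (B.adjugate).map (Int.cast : ℤ → ℚ) from
        ((Int.castRingHom ℚ).map_adjugate B).symm]
  have h3 : (fun j => (y j : ℚ)) ᵥ* ((B.adjugate).map (Int.cast : ℤ → ℚ))
      = fun i => ((y ᵥ* B.adjugate) i : ℚ) := by
    funext i
    simp only [Matrix.vecMul, dotProduct, Matrix.map_apply]
    push_cast
    rfl
  have := congrFun (h1.symm.trans (h2.trans h3)) i
  rw [Pi.smul_apply, smul_eq_mul] at this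
  exact this

end dual

open AddSubgroup in

theorem GT {G : Type*} [AddCommGroup G] [Finite G] (a : ℕ) (ha : 0 < a) (g : G)
    (hg : ∀ k : ℤ, k • g = 0 ↔ (a : ℤ) ∣ k)
    (h2 : ∀ x : G, ∃ k : ℤ, (2 : ℤ) • x = k • g)
    (hexp : Even a → ∀ x : G, (a : ℤ) • x = 0) :
    ∃ m : ℕ, Nonempty (G ≃+ ((Fin m → ZMod 2) × ZMod a)) := by
  classical
  have hag : (a : ℤ) • g = 0 := (hg _).2 dvd_rfl
  have key : ∀ v : G, ∃ w : G, (2:ℤ) • w = 0 ∧ v - w ∈ zmultiples g := by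
    intro v
    obtain ⟨k, hk⟩ := h2 v
    rcases Nat.even_or_odd a with he | ho
    · have hav : (a : ℤ) • v = 0 := hexp he v
      obtain ⟨b, hb⟩ := he
      have hb' : (a : ℤ) = 2 * b := by push_cast [hb]; ring
      have h1 : ((b : ℤ) * k) • g = 0 := by
        rw [mul_smul, ← hk, smul_smul, mul_comm, ← hb', hav]
      have h2' : (a : ℤ) ∣ (b : ℤ) * k := (hg _).1 h1
      have hbpos : 0 < b := by omega
      obtain ⟨c, hc⟩ : (2 : ℤ) ∣ k := by
        obtain ⟨c, hc⟩ := h2'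
        refine ⟨c, mul_left_cancel₀ (show (b:ℤ) ≠ 0 by exact_mod_cast hbpos.ne') ?_⟩
        rw [hc, hb']; ring
      refine ⟨v - c • g, ?_, by simpa using mem_zmultiples_iff.2 ⟨c, rfl⟩⟩
      rw [smul_sub, hk, hc, smul_smul]; exact sub_self _
    · obtain ⟨b, hb⟩ := ho
      refine ⟨v - (k * (b + 1)) • g, ?_,
        by simpa using mem_zmultiples_iff.2 ⟨k * (b+1), rfl⟩⟩
      rw [smul_sub, hk, smul_smul, ← sub_smul,
        show k - 2 * (k * (b+1)) = -k * (a:ℤ) by push_cast [hb]; ring,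
        mul_smul, hag, smul_zero]
  set H := zmultiples g with hH
  let Q := G ⧸ H
  have hQ2 : ∀ q : Q, (2 : ℕ) • q = 0 := by
    intro q
    induction q using QuotientAddGroup.induction_on with
    | H x =>
      obtain ⟨k, hk⟩ := h2 x
      have hm : ((2:ℕ) • x : G) ∈ H := by
        have h22 : ((2:ℕ) • x : G) = (2:ℤ) • x := (natCast_zsmul x 2).symm
        rw [h22, hk]
        exact zsmul_mem (mem_zmultiples g) k
      rw [← QuotientAddGroup.mk_nsmul, QuotientAddGroup.eq_zero_iff]
      exact hm
  letI : Module (ZMod 2) Q := AddCommGroup.zmodModule hQ2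
  haveI : Finite Q := Quotient.finite _
  haveI : Module.Finite (ZMod 2) Q := Module.Finite.of_finite
  set m := Module.finrank (ZMod 2) Q with hm
  let b : Module.Basis (Fin m) (ZMod 2) Q := Module.finBasis (ZMod 2) Q
  -- lift basis vectors to 2-torsion elements of G
  have lift : ∀ j : Fin m, ∃ w : G, (2:ℤ) • w = 0 ∧ QuotientAddGroup.mk' H w = b j := by
    intro j
    obtain ⟨v, hv⟩ := QuotientAddGroup.mk'_surjective H (b j)
    obtain ⟨w, hw1, hw2⟩ := key v
    refine ⟨w, hw1, ?_⟩
    rw [← hv]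
    exact (QuotientAddGroup.eq (s := H)).2 (by simpa [neg_add_eq_sub] using hw2)
  choose w hw1 hw2 using lift
  let π : G →+ Q := QuotientAddGroup.mk' H
  let φ2j : Fin m → (ZMod 2 →+ G) := fun j =>
    ZMod.lift 2 ⟨zmultiplesHom G (w j), by simpa using hw1 j⟩
  let φ2 : (Fin m → ZMod 2) →+ G := AddMonoidHom.mk' (fun v => ∑ j, φ2j j (v j))
      (fun x y => by simp [map_add, Finset.sum_add_distrib])
  let φa : ZMod a →+ G := ZMod.lift a ⟨zmultiplesHom G g, by simpa using hag⟩
  let Φ : ((Fin m → ZMod 2) × ZMod a) →+ G :=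
    (φ2.comp (AddMonoidHom.fst _ _)) + (φa.comp (AddMonoidHom.snd _ _))
  have hΦ : ∀ p : (Fin m → ZMod 2) × ZMod a, Φ p = φ2 p.1 + φa p.2 := fun p => rfl
  have hπ2 : ∀ j (z : ZMod 2), π (φ2j j z) = z • b j := by
    intro j z
    obtain ⟨k, rfl⟩ := ZMod.intCast_surjective z
    have h1 : φ2j j ((k : ℤ) : ZMod 2) = k • w j := by
      simp only [φ2j, ZMod.lift_coe, zmultiplesHom_apply]
    rw [h1, map_zsmul, hw2 j, Int.cast_smul_eq_zsmul]
  have hπφ2 : ∀ v, π (φ2 v) = ∑ j, v j • b j := by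
    intro v
    have : π (φ2 v) = π (∑ j, φ2j j (v j)) := rfl
    rw [this, map_sum]
    exact Finset.sum_congr rfl fun j _ => hπ2 j (v j)
  have hπg : π g = 0 := (QuotientAddGroup.eq_zero_iff g).2 (mem_zmultiples g)
  have hπφa : ∀ t, π (φa t) = 0 := by
    intro t
    obtain ⟨k, rfl⟩ := ZMod.intCast_surjective t
    have h1 : φa ((k : ℤ) : ZMod a) = k • g := by
      simp only [φa, ZMod.lift_coe, zmultiplesHom_apply]
    rw [h1, map_zsmul, hπg, smul_zero]
  have hbij : Function.Bijective Φ := by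
    constructor
    · rw [injective_iff_map_eq_zero]
      rintro ⟨v, t⟩ h0
      rw [hΦ] at h0
      have hπ0 : (∑ j, v j • b j) = 0 := by
        have hc := congrArg π h0
        rw [map_add, map_zero] at hc
        rw [hπφ2, hπφa] at hc
        rw [add_zero] at hc
        exact hc
      rw [← Module.Basis.equivFun_symm_apply] at hπ0
      have hv0 : v = 0 := b.equivFun.symm.injective (by rw [hπ0, map_zero])
      rw [hv0, map_zero, zero_add] at h0
      obtain ⟨k, rfl⟩ := ZMod.intCast_surjective t
      have h1 : φa ((k : ℤ) : ZMod a) = k • g := by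
        simp only [φa, ZMod.lift_coe, zmultiplesHom_apply]
      rw [h1] at h0
      have : ((k : ℤ) : ZMod a) = 0 :=
        (ZMod.intCast_zmod_eq_zero_iff_dvd k a).2 ((hg k).1 h0)
      rw [hv0, this]
      rfl
    · intro x
      set q := b.equivFun (π x) with hq
      have hqq : π (φ2 q) = π x := by
        rw [hπφ2, ← Module.Basis.equivFun_symm_apply, hq, LinearEquiv.symm_apply_apply]
      have hmem : x - φ2 q ∈ H := by
        have : π (x - φ2 q) = 0 := by rw [map_sub, hqq, sub_self]
        exact (QuotientAddGroup.eq_zero_iff _).1 this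
      obtain ⟨k, hk⟩ := mem_zmultiples_iff.1 hmem
      refine ⟨(q, ((k : ℤ) : ZMod a)), ?_⟩
      rw [hΦ]
      have h1 : φa ((k : ℤ) : ZMod a) = k • g := by
        simp only [φa, ZMod.lift_coe, zmultiplesHom_apply]
      rw [h1]
      show φ2 q + k • g = x
      rw [hk]
      abel
  exact ⟨m, ⟨(AddEquiv.ofBijective Φ hbij).symm⟩⟩

/-- If `r` is primitive in a nondegenerate even lattice, `σ_r ∈ O(L)` and `σ_r`
acts as `-id` on the discriminant group `D(L)`, then for some `a > 0` either `r² = ±2a` with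
`div(r) = a` odd, or `r² = ±a` with `div(r) = a` or `a/2`; moreover
`D(L) ≅ (ℤ/2ℤ)^m × (ℤ/aℤ)` for some `m ≥ 0`. -/
theorem stmt_3 (n : ℕ) (B : Matrix (Fin n) (Fin n) ℤ)
    (hsymm : B.IsSymm) (hnd : B.det ≠ 0)
    (heven : ∀ v : Fin n → ℤ, Even (v ⬝ᵥ B.mulVec v))
    (r : Fin n → ℤ)
    (hprim : ∀ (k : ℤ) (v : Fin n → ℤ), r = k • v → IsUnit k)
    (hr : r ⬝ᵥ B.mulVec r ≠ 0)
    (divr : ℤ) (hdivpos : 0 < divr)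
    (hdiv : ∀ m : ℤ, (∃ v : Fin n → ℤ, r ⬝ᵥ B.mulVec v = m) ↔ divr ∣ m)
    (hO : ∀ l : Fin n → ℤ, reflQ B r (fun i => (l i : ℚ)) ∈ intVecs (Fin n))
    (hminus : ∀ x ∈ dualLat B, reflQ B r x + x ∈ intVecs (Fin n)) :
    ∃ a : ℤ, 0 < a ∧
      ((((r ⬝ᵥ B.mulVec r = 2 * a) ∨ (r ⬝ᵥ B.mulVec r = -(2 * a))) ∧ divr = a ∧ Odd a) ∨
        (((r ⬝ᵥ B.mulVec r = a) ∨ (r ⬝ᵥ B.mulVec r = -a)) ∧ (divr = a ∨ 2 * divr = a))) ∧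
      ∃ m : ℕ, Nonempty (discGroup B ≃+ ((Fin m → ZMod 2) × ZMod a.toNat)) := by
  classical
  have hR2Q : ((r ⬝ᵥ B.mulVec r : ℤ) : ℚ) ≠ 0 := Int.cast_ne_zero.2 hr
  have hdQ : ((divr : ℚ)) ≠ 0 := Int.cast_ne_zero.2 hdivpos.ne'
  set R2 : ℤ := r ⬝ᵥ B.mulVec r with hR2def
  set Bq : Matrix (Fin n) (Fin n) ℚ := B.map (Int.cast : ℤ → ℚ) with hBqdef
  set rq : Fin n → ℚ := fun i => (r i : ℚ) with hrqdef
  -- membership rephrasings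
  have memI : ∀ x : Fin n → ℚ, x ∈ intVecs (Fin n) ↔ ∀ i, ∃ z : ℤ, x i = z := fun x => Iff.rfl
  have memD : ∀ x : Fin n → ℚ, x ∈ dualLat B ↔
      ∀ v : Fin n → ℤ, ∃ z : ℤ, x ⬝ᵥ Bq.mulVec (fun i => (v i : ℚ)) = z := fun x => Iff.rfl
  -- coordinates of the "minus" condition
  have hreflco : ∀ (x : Fin n → ℚ), x ∈ dualLat B → ∀ (t : ℤ),
      x ⬝ᵥ Bq.mulVec rq = (t : ℚ) →
      ∀ i, ∃ z : ℤ, 2 * x i - (2 * t / (R2 : ℚ)) * (r i : ℚ) = z := by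
    intro x hx t ht i
    obtain ⟨z, hz⟩ := (memI _).1 (hminus x hx) i
    refine ⟨z, ?_⟩
    rw [← hz]
    show 2 * x i - 2 * (t : ℚ) / (R2 : ℚ) * (r i : ℚ) = reflQ B r x i + x i
    rw [reflQ, ht]
    push_cast
    ring
  -- step 1 : divr ∣ R2
  have hdvd1 : divr ∣ R2 := (hdiv R2).1 ⟨r, rfl⟩
  -- step 2 : R2 ∣ 2*divr
  have hdvd2 : R2 ∣ 2 * divr := by
    obtain ⟨v0, hv0⟩ := (hdiv divr).2 dvd_rfl
    apply primDvd r hprim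
    intro i
    obtain ⟨z, hz⟩ := (memI _).1 (hO v0) i
    rw [reflQ] at hz
    rw [castPair] at hz
    rw [symmPairInt B hsymm v0 r, hv0] at hz
    refine ⟨(v0 i : ℤ) - z, ?_⟩
    have h2 : 2 * (divr:ℚ) / (R2:ℚ) * (r i : ℚ) = ((v0 i : ℤ):ℚ) - z := by
      rw [← hz]; ring
    have h3 : 2 * (divr:ℚ) * (r i : ℚ) = (R2:ℚ) * (((v0 i : ℤ):ℚ) - z) := by
      rw [← h2]; field_simp
    exact_mod_cast h3
  have hR2even : Even R2 := heven r
  -- the quotient group is finite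
  haveI hfinD : Finite (discGroup B) := by
    set N : ℕ := B.det.natAbs with hNdef
    haveI : NeZero N := ⟨Int.natAbs_ne_zero.2 hnd⟩
    have hNd : (N : ℤ) ∣ B.det := Int.natAbs_dvd.2 dvd_rfl
    let Fd : dualLat B →+ (Fin n → ZMod N) := AddMonoidHom.mk'
      (fun x => fun i => ((((B.det : ℚ) * (x : Fin n → ℚ) i).num : ℤ) : ZMod N))
      (by
        rintro x y
        funext i
        obtain ⟨zx, hzx⟩ := dual_det_int B (x : Fin n → ℚ) x.2 i
        obtain ⟨zy, hzy⟩ := dual_det_int B (y : Fin n → ℚ) y.2 i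
        have hsum : (B.det : ℚ) * ((x + y : dualLat B) : Fin n → ℚ) i = ((zx + zy : ℤ) : ℚ) := by
          have h0 : ((x + y : dualLat B) : Fin n → ℚ) i = (x : Fin n → ℚ) i + (y : Fin n → ℚ) i := rfl
          rw [h0, mul_add, hzx, hzy]
          push_cast
          ring
        show ((((B.det : ℚ) * ((x + y : dualLat B) : Fin n → ℚ) i).num : ℤ) : ZMod N)
          = ((((B.det : ℚ) * (x : Fin n → ℚ) i).num : ℤ) : ZMod N)
            + ((((B.det : ℚ) * (y : Fin n → ℚ) i).num : ℤ) : ZMod N)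
        rw [hsum, hzx, hzy, Rat.num_intCast, Rat.num_intCast, Rat.num_intCast]
        push_cast
        ring)
    have hker : ∀ x : dualLat B, x ∈ (intVecs (Fin n)).addSubgroupOf (dualLat B) → Fd x = 0 := by
      intro x hx
      funext i
      obtain ⟨w, hw⟩ := (AddSubgroup.mem_addSubgroupOf.1 hx) i
      have h0 : (B.det : ℚ) * (x : Fin n → ℚ) i = ((B.det * w : ℤ) : ℚ) := by
        rw [hw]; push_cast; ring
      show ((((B.det : ℚ) * (x : Fin n → ℚ) i).num : ℤ) : ZMod N) = 0
      rw [h0, Rat.num_intCast, ZMod.intCast_zmod_eq_zero_iff_dvd]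
      exact Dvd.dvd.mul_right hNd w
    let Fbar := QuotientAddGroup.lift _ Fd hker
    apply Finite.of_injective Fbar
    rw [injective_iff_map_eq_zero]
    intro q
    induction q using QuotientAddGroup.induction_on with
    | H x =>
      intro hq
      have hq' : Fd x = 0 := hq
      rw [QuotientAddGroup.eq_zero_iff, AddSubgroup.mem_addSubgroupOf]
      intro i
      obtain ⟨z, hz⟩ := dual_det_int B (x : Fin n → ℚ) x.2 i
      have h1 : ((z : ℤ) : ZMod N) = 0 := by
        have := congrFun hq' i
        rw [show Fd x i = ((((B.det : ℚ) * (x : Fin n → ℚ) i).num : ℤ) : ZMod N) from rfl,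
          hz, Rat.num_intCast] at this
        exact this
      have h2 : B.det ∣ z := by
        have := (ZMod.intCast_zmod_eq_zero_iff_dvd z N).1 h1
        exact Int.natAbs_dvd.1 this
      obtain ⟨w, hw⟩ := h2
      refine ⟨w, ?_⟩
      have hd0 : ((B.det : ℚ)) ≠ 0 := Int.cast_ne_zero.2 hnd
      have h3 : (B.det : ℚ) * (x : Fin n → ℚ) i = (B.det : ℚ) * (w : ℚ) := by
        rw [hz, hw]; push_cast; ring
      exact mul_left_cancel₀ hd0 h3
  -- the distinguished dual vector r / divr
  set rdq : Fin n → ℚ := fun i => (r i : ℚ) / (divr : ℚ) with hrdqdef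
  have hrdq : rdq ∈ dualLat B := by
    rw [memD]
    intro v
    obtain ⟨w, hw⟩ := (hdiv (r ⬝ᵥ B.mulVec v)).1 ⟨v, rfl⟩
    refine ⟨w, ?_⟩
    have h1 : rdq = ((divr : ℚ))⁻¹ • rq := by
      funext i; simp [rdq, rq, div_eq_inv_mul]
    rw [h1, smul_dotProduct, castPair, hw]
    push_cast
    field_simp
    rw [smul_eq_mul]
    field_simp
  set Hsub := (intVecs (Fin n)).addSubgroupOf (dualLat B) with hHsub
  set mkD : dualLat B →+ discGroup B := QuotientAddGroup.mk' Hsub with hmkD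
  have hmkzero : ∀ x : dualLat B, mkD x = 0 ↔ (x : Fin n → ℚ) ∈ intVecs (Fin n) := by
    intro x
    rw [hmkD, QuotientAddGroup.mk'_apply, QuotientAddGroup.eq_zero_iff,
      AddSubgroup.mem_addSubgroupOf]
  have hmksurj : ∀ q : discGroup B, ∃ x : dualLat B, mkD x = q :=
    fun q => QuotientAddGroup.mk'_surjective Hsub q
  set cD : discGroup B := mkD ⟨rdq, hrdq⟩ with hcDdef
  have hsmulco : ∀ (k : ℤ) (x : dualLat B), ((k • x : dualLat B) : Fin n → ℚ) = k • (x : Fin n → ℚ) :=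
    fun k x => rfl
  have hcD : ∀ k : ℤ, k • cD = 0 ↔ divr ∣ k := by
    intro k
    rw [hcDdef, ← map_zsmul, hmkzero, hsmulco, memI]
    constructor
    · intro h
      apply primDvd r hprim divr k
      intro i
      obtain ⟨z, hz⟩ := h i
      have h1 : (k • rdq) i = (k : ℚ) * ((r i : ℚ) / divr) := by
        simp [rdq, zsmul_eq_mul]
      rw [h1] at hz
      have h2 : (k : ℚ) * (r i : ℚ) = (divr : ℚ) * z := by
        field_simp at hz
        linarith [hz]
      refine ⟨z, ?_⟩
      exact_mod_cast h2
    · rintro ⟨m, rfl⟩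
      intro i
      refine ⟨m * r i, ?_⟩
      have h1 : ((divr * m) • rdq) i = ((divr : ℚ) * m) * ((r i : ℚ) / divr) := by
        simp [rdq, zsmul_eq_mul]
      rw [h1]
      push_cast
      field_simp
  -- the relation 2x = s • c
  have hrel : ∀ x : dualLat B, ∃ t : ℤ,
      ((x : Fin n → ℚ) ⬝ᵥ Bq.mulVec rq = (t : ℚ)) ∧
      ∀ s : ℤ, s * R2 = 2 * t * divr → (2 : ℤ) • mkD x = s • cD := by
    intro x
    obtain ⟨t, ht⟩ := (memD _).1 x.2 r
    refine ⟨t, ht, ?_⟩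
    intro s hs
    rw [← sub_eq_zero, hcDdef, ← map_zsmul, ← map_zsmul, ← map_sub, hmkzero]
    rw [memI]
    intro i
    obtain ⟨z, hz⟩ := hreflco (x : Fin n → ℚ) x.2 t ht i
    refine ⟨z, ?_⟩
    rw [← hz]
    have h1 : (((2:ℤ) • x - s • (⟨rdq, hrdq⟩ : dualLat B) : dualLat B) : Fin n → ℚ) i
        = 2 * (x : Fin n → ℚ) i - (s : ℚ) * ((r i : ℚ) / divr) := by
      show (2:ℤ) • (x : Fin n → ℚ) i - (s:ℤ) • rdq i = _
      simp [rdq, zsmul_eq_mul]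
    rw [h1]
    have hcoef : (s : ℚ) / (divr : ℚ) = 2 * (t : ℚ) / (R2 : ℚ) := by
      rw [div_eq_div_iff hdQ hR2Q]
      exact_mod_cast hs
    have : (s : ℚ) * ((r i : ℚ) / divr) = 2 * (t:ℚ) / (R2:ℚ) * (r i : ℚ) := by
      rw [mul_div_assoc', mul_comm ((s:ℚ)) _, mul_div_assoc, hcoef]
      ring
    rw [this]
  -- which multiple of divr is R2?
  obtain ⟨u, hu⟩ := hdvd1
  have hune : u = 1 ∨ u = -1 ∨ u = 2 ∨ u = -2 := by
    have h2 : u ∣ 2 := by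
      have h3 : divr * u ∣ divr * 2 := by rw [← hu]; rw [mul_comm divr 2]; exact hdvd2
      exact (mul_dvd_mul_iff_left hdivpos.ne').1 h3
    have h4 : u.natAbs ∣ 2 := by
      have := Int.natAbs_dvd_natAbs.2 h2
      simpa using this
    have h5 := (Nat.dvd_prime Nat.prime_two).1 h4
    rcases Int.natAbs_eq u with e | e <;> rcases h5 with h | h <;> omega
  have htoNat : ((divr.toNat : ℤ)) = divr := Int.toNat_of_nonneg hdivpos.le
  have htoNatpos : 0 < divr.toNat := by omega
  obtain ⟨ε, hε, huc⟩ : ∃ ε : ℤ, (ε = 1 ∨ ε = -1) ∧ (u = ε ∨ u = 2 * ε) := by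
    rcases hune with h|h|h|h
    · exact ⟨1, Or.inl rfl, Or.inl h⟩
    · exact ⟨-1, Or.inr rfl, Or.inl h⟩
    · exact ⟨1, Or.inl rfl, Or.inr (by omega)⟩
    · exact ⟨-1, Or.inr rfl, Or.inr (by omega)⟩
  have hεε : ε * ε = 1 := by rcases hε with rfl | rfl <;> norm_num
  have hgnat : ∀ k : ℤ, k • cD = 0 ↔ ((divr.toNat : ℤ)) ∣ k := by
    intro k; rw [htoNat]; exact hcD k
  rcases huc with huc | huc
  · -- Case A : R2 = ε * divr, divr even, a = divr
    have hR2e : R2 = divr * ε := by rw [hu, huc]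
    have hdeven : Even divr := by
      rcases hε with rfl | rfl
      · simpa [hR2e] using hR2even
      · have : Even (-R2) := hR2even.neg
        simpa [hR2e, parity_simps] using hR2even
    have h2' : ∀ x : discGroup B, ∃ k : ℤ, Even k ∧ (2:ℤ) • x = k • cD := by
      intro x
      obtain ⟨y, rfl⟩ := hmksurj x
      obtain ⟨t, ht, himp⟩ := hrel y
      refine ⟨2 * (ε * t), ⟨ε * t, by ring⟩, himp _ ?_⟩
      rw [hR2e]
      linear_combination 2 * t * divr * hεε
    have h2 : ∀ x : discGroup B, ∃ k : ℤ, (2:ℤ) • x = k • cD :=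
      fun x => ⟨(h2' x).choose, (h2' x).choose_spec.2⟩
    have hexp : Even divr.toNat → ∀ x : discGroup B, ((divr.toNat : ℤ)) • x = 0 := by
      intro _ x
      obtain ⟨k, ⟨k', hk'⟩, hk⟩ := h2' x
      obtain ⟨dd, hdd⟩ := hdeven
      have hcd0 : divr • cD = 0 := (hcD divr).2 dvd_rfl
      rw [hk'] at hk
      have h2w : (2:ℤ) • (x - k' • cD) = 0 := by
        have e1 : (2:ℤ) • (x - k' • cD) = (2:ℤ) • x - (k' + k') • cD := by module
        rw [e1, hk, sub_self]
      rw [htoNat]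
      have e2 : (divr : ℤ) • x = divr • (x - k' • cD) + k' • (divr • cD) := by module
      have e3 : (divr : ℤ) • (x - k' • cD) = dd • ((2:ℤ) • (x - k' • cD)) := by
        match_scalars <;> (rw [show (divr:ℤ) = 2 * dd from by omega]; ring)
      rw [e2, e3, h2w, smul_zero, hcd0, smul_zero, add_zero]
    obtain ⟨m, ⟨eqv⟩⟩ := GT divr.toNat htoNatpos cD hgnat h2 hexp
    refine ⟨divr, hdivpos, Or.inr ⟨?_, Or.inl rfl⟩, m, ⟨eqv⟩⟩
    rcases hε with rfl | rfl
    · exact Or.inl (by rw [hR2e]; ring)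
    · exact Or.inr (by rw [hR2e]; ring)
  · -- R2 = 2 ε divr
    have hR2e : R2 = divr * (2 * ε) := by rw [hu, huc]
    rcases Int.even_or_odd divr with hdeven | hdodd
    · -- Case C : a = 2 * divr
      obtain ⟨dd, hdd⟩ := hdeven
      have htoNat2 : (((2*divr).toNat : ℤ)) = 2 * divr := Int.toNat_of_nonneg (by omega)
      obtain ⟨f, hf⟩ := bezout r hprim
      have hBqdet : IsUnit Bq.det := by
        rw [hBqdef, castDet]
        exact isUnit_iff_ne_zero.2 (Int.cast_ne_zero.2 hnd)
      set x0 : Fin n → ℚ := (fun i => (f i : ℚ)) ᵥ* Bq⁻¹ with hx0def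
      have hx0B : x0 ᵥ* Bq = (fun i => (f i : ℚ)) := by
        rw [hx0def, Matrix.vecMul_vecMul, Matrix.nonsing_inv_mul Bq hBqdet, Matrix.vecMul_one]
      have hx0dual : x0 ∈ dualLat B := by
        rw [memD]
        intro v
        refine ⟨f ⬝ᵥ v, ?_⟩
        rw [Matrix.dotProduct_mulVec, hx0B, castDot]
      have hx0r : x0 ⬝ᵥ Bq.mulVec rq = (((1:ℤ)):ℚ) := by
        rw [hrqdef, Matrix.dotProduct_mulVec, hx0B, castDot, hf]
      obtain ⟨t0, ht0, himp0⟩ := hrel ⟨x0, hx0dual⟩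
      have ht01 : t0 = 1 := by
        have h1 : ((t0:ℤ):ℚ) = ((1:ℤ):ℚ) := ht0.symm.trans hx0r
        exact_mod_cast h1
      subst ht01
      set gD : discGroup B := mkD ⟨x0, hx0dual⟩ with hgDdef
      have h2g : (2:ℤ) • gD = ε • cD :=
        himp0 ε (by rw [hR2e]; linear_combination 2 * divr * hεε)
      have hc0 : divr • cD = 0 := (hcD divr).2 dvd_rfl
      have h2dg : ((2*divr):ℤ) • gD = 0 := by
        have e : ((2*divr):ℤ) • gD = divr • ((2:ℤ) • gD) := by module
        rw [e, h2g]
        have e2 : divr • ((ε:ℤ) • cD) = ε • (divr • cD) := by module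
        rw [e2, hc0, smul_zero]
      have hdg : divr • gD ≠ 0 := by
        intro h0
        rw [hgDdef, ← map_zsmul, hmkzero, memI] at h0
        have hw : ∀ i, ∃ w : ℤ, r i = 2 * w := by
          intro i
          obtain ⟨zi, hzi⟩ := hreflco x0 hx0dual 1 ht0 i
          obtain ⟨ui, hui⟩ := h0 i
          have e1 : (divr:ℚ) * x0 i = ui := by
            have h := hui
            simp only [hsmulco, Pi.smul_apply, zsmul_eq_mul] at h
            exact h
          refine ⟨ε * (ui - dd * zi), ?_⟩
          have hR2q : (R2:ℚ) = (divr:ℚ) * (2 * ε) := by rw [hR2e]; push_cast; ring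
          have hddq : (divr:ℚ) = 2 * dd := by
            have h9 : divr = 2 * dd := by omega
            exact_mod_cast congrArg (fun z : ℤ => (z : ℚ)) h9
          have hεq : ((ε:ℚ)) * ε = 1 := by exact_mod_cast hεε
          have e2 : (r i : ℚ) = 2 * ((ε:ℚ) * (ui - dd * zi)) := by
            have hz2 : 2 * x0 i - 2 * (((1:ℤ)):ℚ) / (R2:ℚ) * (r i:ℚ) = zi := hzi
            have h3 : 2 * (((1:ℤ)):ℚ) / (R2:ℚ) * (r i:ℚ) = 2 * x0 i - zi := by linarith
            have h4 : (2:ℚ) * (r i:ℚ) = (2 * x0 i - zi) * (R2:ℚ) := by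
              rw [← h3]
              field_simp
              simp
            rw [hR2q] at h4
            linear_combination (1/2) * h4 + 2 * (ε:ℚ) * e1 - (ε:ℚ) * zi * hddq
          exact_mod_cast e2
        choose w hwspec using hw
        have h2u : IsUnit (2:ℤ) := hprim 2 w (funext fun i => by
          rw [hwspec i]; simp)
        rcases Int.isUnit_iff.1 h2u with h | h <;> omega
      have hggD : ∀ k : ℤ, k • gD = 0 ↔ (2*divr) ∣ k := by
        intro k
        constructor
        · intro hk0
          have hdvk : divr ∣ k := by
            have e : (k*ε) • cD = (2*k) • gD := by
              calc (k*ε) • cD = k • (ε • cD) := by module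
                _ = k • ((2:ℤ) • gD) := by rw [h2g]
                _ = (2*k) • gD := by module
            have hz : ((2*k):ℤ) • gD = 0 := by
              have e2 : ((2*k):ℤ) • gD = 2 • (k • gD) := by module
              rw [e2, hk0, smul_zero]
            have hkε : divr ∣ k * ε := (hcD _).1 (e.trans hz)
            have hke : k = k * ε * ε := by rw [mul_assoc, hεε, mul_one]
            exact hke ▸ Dvd.dvd.mul_right hkε ε
          obtain ⟨k', hk'⟩ := hdvk
          rcases Int.even_or_odd k' with ⟨m, hm⟩ | ⟨m, hm⟩
          · exact ⟨m, by rw [hk', hm]; ring⟩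
          · exfalso
            apply hdg
            have e : divr • gD = k • gD - m • (((2*divr):ℤ) • gD) := by
              match_scalars
              rw [hk', hm]
              ring
            rw [e, hk0, h2dg, smul_zero, sub_zero]
        · rintro ⟨m, rfl⟩
          have e : ((2*divr*m):ℤ) • gD = m • (((2*divr):ℤ) • gD) := by module
          rw [e, h2dg, smul_zero]
      have hggDnat : ∀ k : ℤ, k • gD = 0 ↔ (((2*divr).toNat:ℤ)) ∣ k := by
        intro k; rw [htoNat2]; exact hggD k
      have hcg : cD = (2*ε) • gD := by
        calc cD = (ε*ε) • cD := by rw [hεε, one_smul]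
          _ = ε • (ε • cD) := by module
          _ = ε • ((2:ℤ) • gD) := by rw [h2g]
          _ = (2*ε) • gD := by module
      have h2 : ∀ x : discGroup B, ∃ k : ℤ, (2:ℤ) • x = k • gD := by
        intro x
        obtain ⟨y, rfl⟩ := hmksurj x
        obtain ⟨t, ht, himp⟩ := hrel y
        have hsc : (2:ℤ) • mkD y = (ε*t) • cD :=
          himp _ (by rw [hR2e]; linear_combination 2 * t * divr * hεε)
        refine ⟨(ε*t)*(2*ε), ?_⟩
        rw [hsc, hcg]
        module
      have hexp2 : Even (2*divr).toNat → ∀ x : discGroup B, (((2*divr).toNat:ℤ)) • x = 0 := by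
        intro _ x
        obtain ⟨y, rfl⟩ := hmksurj x
        obtain ⟨t, ht, himp⟩ := hrel y
        have hsc : (2:ℤ) • mkD y = (ε*t) • cD :=
          himp _ (by rw [hR2e]; linear_combination 2 * t * divr * hεε)
        rw [htoNat2]
        have e : ((2*divr):ℤ) • mkD y = divr • ((2:ℤ) • mkD y) := by module
        rw [e, hsc]
        have e2 : divr • (((ε*t):ℤ) • cD) = (ε*t) • (divr • cD) := by module
        rw [e2, hc0, smul_zero]
      obtain ⟨m, ⟨eqv⟩⟩ := GT (2*divr).toNat (by omega) gD hggDnat h2 hexp2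
      refine ⟨2*divr, by omega, Or.inr ⟨?_, Or.inr rfl⟩, m, ⟨eqv⟩⟩
      rcases hε with rfl | rfl
      · exact Or.inl (by rw [hR2e]; ring)
      · exact Or.inr (by rw [hR2e]; ring)
    · -- Case B : divr odd, a = divr
      have h2 : ∀ x : discGroup B, ∃ k : ℤ, (2:ℤ) • x = k • cD := by
        intro x
        obtain ⟨y, rfl⟩ := hmksurj x
        obtain ⟨t, ht, himp⟩ := hrel y
        refine ⟨ε * t, himp _ ?_⟩
        rw [hR2e]
        linear_combination 2 * t * divr * hεε
      have hexp : Even divr.toNat → ∀ x : discGroup B, ((divr.toNat : ℤ)) • x = 0 := by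
        intro h
        exfalso
        have h6 : Even divr := by rwa [← htoNat, Int.even_coe_nat]
        exact (Int.not_odd_iff_even.2 h6) hdodd
      obtain ⟨m, ⟨eqv⟩⟩ := GT divr.toNat htoNatpos cD hgnat h2 hexp
      refine ⟨divr, hdivpos, Or.inl ⟨?_, rfl, ?_⟩, m, ⟨eqv⟩⟩
      · rcases hε with rfl | rfl
        · exact Or.inl (by rw [hR2e]; ring)
        · exact Or.inr (by rw [hR2e]; ring)
      · exact hdodd
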